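/- Let (X, w) be a weighted set and let F(X,w) together with f : X → F(X,w) be the free bounded archimedean ℓ-algebra on (X, w) (so ‖f(x)‖ ≤ w(x) for all x, and every function h : X → A into a bounded archimedean ℓ-algebra with ‖h(x)‖ ≤ w(x) factors uniquely through f via a bal-morphism). Then in fact ‖f(x)‖ = w(x) for every x ∈ X. -/
import Mathlib


/-- An ℓ-algebra: a commutative unital ℝ-algebra with a lattice order such that
addition is translation-invariant, products of nonnegatives are nonnegative, and
scalar multiplication by nonnegative reals preserves nonnegativity. -/
class LAlg (A : Type*) extends CommRing A, Lattice A, Algebra ℝ A where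
  add_le_add_right' : ∀ a b : A, a ≤ b → ∀ c : A, a + c ≤ b + c
  mul_nonneg' : ∀ a b : A, 0 ≤ a → 0 ≤ b → 0 ≤ a * b
  smul_nonneg' : ∀ (r : ℝ) (a : A), 0 ≤ r → 0 ≤ a → 0 ≤ r • a

/-- `A` is bounded: `1` is a strong order unit. -/
def LAlg.IsBounded (A : Type*) [LAlg A] : Prop := ∀ a : A, ∃ n : ℕ, a ≤ n • (1 : A)

/-- `A` is archimedean. -/
def LAlg.IsArch (A : Type*) [LAlg A] : Prop := ∀ a b : A, (∀ n : ℕ, n • a ≤ b) → a ≤ 0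

/-- The norm ‖a‖ = inf {r : ℝ | |a| ≤ r·1}, where |a| = a ⊔ -a. -/
noncomputable def lnorm {A : Type*} [LAlg A] (a : A) : ℝ := sInf {r : ℝ | a ⊔ -a ≤ r • (1 : A)}

/-- A bal-morphism: a unital ℝ-algebra homomorphism preserving binary joins. -/
def IsBalHom {A B : Type*} [LAlg A] [LAlg B] (α : A →ₐ[ℝ] B) : Prop :=
  ∀ a b : A, α (a ⊔ b) = α a ⊔ α b

noncomputable instance : LAlg ℝ where
  add_le_add_right' := fun a b hab c => by linarith
  mul_nonneg' := fun a b => mul_nonneg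
  smul_nonneg' := fun r a hr ha => smul_nonneg hr ha

lemma lnorm_real (r : ℝ) : lnorm r = |r| := by
  have hset : {s : ℝ | r ⊔ -r ≤ s • (1 : ℝ)} = Set.Ici |r| := by
    ext s
    simp only [Set.mem_setOf_eq, smul_eq_mul, mul_one, sup_le_iff, Set.mem_Ici, abs_le]
    constructor <;> intro h <;> constructor <;> linarith [h.1, h.2]
  rw [lnorm, hset, csInf_Ici]

lemma real_bounded : LAlg.IsBounded ℝ := by
  intro a
  exact ⟨⌈a⌉₊, by simpa using Nat.le_ceil a⟩

lemma real_arch : LAlg.IsArch ℝ := by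
  intro a b hab
  by_contra h
  push_neg at h
  obtain ⟨n, hn⟩ := Archimedean.arch b h
  have := hab (n + 1)
  have : (n + 1) • a = n • a + a := succ_nsmul a n
  nlinarith [hab (n + 1), succ_nsmul a n, hn]

/-- if (F, f) is the free bounded archimedean ℓ-algebra on the weighted
set (X, w), then ‖f x‖ = w x for every x. -/
theorem stmt6 (X : Type) (w : X → ℝ) (hw : ∀ x, 0 ≤ w x)
    (F : Type) [LAlg F] (hFb : LAlg.IsBounded F) (hFa : LAlg.IsArch F)
    (f : X → F) (hf : ∀ x, lnorm (f x) ≤ w x)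
    (ump : ∀ (A : Type) [LAlg A], LAlg.IsBounded A → LAlg.IsArch A →
      ∀ h : X → A, (∀ x, lnorm (h x) ≤ w x) →
        ∃! α : F →ₐ[ℝ] A, IsBalHom α ∧ α ∘ f = h) :
    ∀ x, lnorm (f x) = w x := by
  intro x
  obtain ⟨α, ⟨hbal, hcomp⟩, -⟩ := ump ℝ real_bounded real_arch w
    (fun y => by rw [lnorm_real, abs_of_nonneg (hw y)])
  have hα : α (f x) = w x := congrFun hcomp x
  refine le_antisymm (hf x) (le_csInf ?_ ?_)
  · obtain ⟨n, hn⟩ := hFb (f x ⊔ -(f x))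
    exact ⟨(n : ℝ), by simpa [Nat.cast_smul_eq_nsmul] using hn⟩
  · intro r hr
    have hmono : α (f x ⊔ -(f x)) ≤ α (r • (1 : F)) := by
      have : (f x ⊔ -(f x)) ⊔ r • (1 : F) = r • (1 : F) := sup_eq_right.mpr hr
      have h2 := hbal (f x ⊔ -(f x)) (r • (1 : F))
      rw [this] at h2
      exact le_of_sup_eq h2.symm
    rw [hbal (f x) (-(f x)), map_neg, map_smul, map_one, hα, smul_eq_mul, mul_one] at hmono
    exact le_trans le_sup_left hmono
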